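/- If $G$ is a twin-free graph on $n$ vertices whose closed neighbourhood hypergraph has VC-dimension at most $d$, then every identifying code of $G$ has size at least $(n-1)^{1/d}$. -/

import Mathlib

open Finset

lemma sum_choose_le_pow_add_one (d : ℕ) (hd : 1 ≤ d) (m : ℕ) (hm : 1 ≤ m) :
    ∑ i ∈ range (d + 1), m.choose i ≤ m ^ d + 1 := by
  induction d with
  | zero => omega
  | succ d ih =>
    rcases Nat.eq_or_lt_of_le hd with h | h
    · obtain rfl : d = 0 := by omega
      simp [Finset.sum_range_succ, Nat.add_comm]
    · have hd1 : 1 ≤ d := by omega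
      have ih' := ih hd1
      rw [Finset.sum_range_succ]
      have h1 : m.choose (d + 1) ≤ m.choose (d + 1) * (d + 1) := by
        nlinarith
      have h2 : m.choose (d + 1) * (d + 1) = m.choose d * (m - d) :=
        Nat.choose_succ_right_eq m d
      have h3 : m.choose d ≤ m ^ d := Nat.choose_le_pow m d
      have h4 : m - d ≤ m - 1 := by omega
      have h5 : m.choose (d + 1) ≤ m ^ d * (m - 1) := by
        calc m.choose (d + 1) ≤ m.choose d * (m - d) := by omega
          _ ≤ m ^ d * (m - 1) := Nat.mul_le_mul h3 h4
      have h6 : m ^ d + m ^ d * (m - 1) = m ^ (d + 1) := by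
        have : m ^ d * m = m ^ (d + 1) := (pow_succ m d).symm
        have hm1 : 1 + (m - 1) = m := by omega
        calc m ^ d + m ^ d * (m - 1) = m ^ d * (1 + (m - 1)) := by ring
          _ = m ^ d * m := by rw [hm1]
          _ = m ^ (d + 1) := this
      omega

/-- If `G` is a twin-free graph on `n ≥ 1` vertices whose closed neighbourhood hypergraph has
VC-dimension at most `d ≥ 1`, then every identifying code of `G` has size at least
`(n-1)^(1/d)`. -/
theorem stmt1 {V : Type*} [Fintype V] (G : SimpleGraph V) (d : ℕ) (hd : 1 ≤ d)
    (hn : 1 ≤ Fintype.card V)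
    (htwinfree : ∀ u v : V,
      {w : V | w = u ∨ G.Adj u w} = {w : V | w = v ∨ G.Adj v w} → u = v)
    (hVC : ∀ X : Finset V,
      (∀ S ⊆ (X : Set V), ∃ w : V, {x ∈ (X : Set V) | x = w ∨ G.Adj w x} = S) → X.card ≤ d)
    (C : Finset V)
    (hdom : ∀ v : V, ∃ c ∈ C, c = v ∨ G.Adj v c)
    (hsep : ∀ u v : V,
      {c : V | c ∈ C ∧ (c = u ∨ G.Adj u c)} = {c : V | c ∈ C ∧ (c = v ∨ G.Adj v c)} → u = v) :
    ((Fintype.card V : ℝ) - 1) ^ (1 / (d : ℝ)) ≤ (C.card : ℝ) := by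
  classical
  have hV : Nonempty V := Fintype.card_pos_iff.mp hn
  -- C is nonempty
  have hm : 1 ≤ C.card := by
    obtain ⟨v⟩ := hV
    obtain ⟨c, hc, _⟩ := hdom v
    exact Finset.card_pos.mpr ⟨c, hc⟩
  set m := C.card with hmdef
  -- the trace family
  set f : V → Finset V := fun v => C.filter (fun c => c = v ∨ G.Adj v c) with hf
  have hfinj : Function.Injective f := by
    intro u v huv
    apply hsep u v
    ext c
    constructor
    · intro ⟨h1, h2⟩
      have : c ∈ f u := Finset.mem_filter.mpr ⟨h1, h2⟩
      rw [huv] at this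
      exact ⟨h1, (Finset.mem_filter.mp this).2⟩
    · intro ⟨h1, h2⟩
      have : c ∈ f v := Finset.mem_filter.mpr ⟨h1, h2⟩
      rw [← huv] at this
      exact ⟨h1, (Finset.mem_filter.mp this).2⟩
  set 𝒜 : Finset (Finset V) := Finset.univ.image f with hA
  have hcardA : 𝒜.card = Fintype.card V := by
    rw [hA, Finset.card_image_of_injective _ hfinj, Finset.card_univ]
  -- shattered sets are small and contained in C
  have hshat : ∀ s ∈ 𝒜.shatterer, s ⊆ C ∧ s.card ≤ d := by
    intro s hs
    rw [Finset.mem_shatterer] at hs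
    have hsC : s ⊆ C := by
      obtain ⟨u, hu, hus⟩ := hs (Finset.Subset.refl s)
      rw [hA, Finset.mem_image] at hu
      obtain ⟨v, _, rfl⟩ := hu
      intro x hx
      have : x ∈ s ∩ f v := by rw [hus]; exact hx
      exact (Finset.mem_filter.mp (Finset.mem_inter.mp this).2).1
    refine ⟨hsC, hVC s ?_⟩
    intro S hS
    set t : Finset V := s.filter (fun x => x ∈ S) with ht
    have hts : t ⊆ s := Finset.filter_subset _ _
    obtain ⟨u, hu, hus⟩ := hs hts
    rw [hA, Finset.mem_image] at hu
    obtain ⟨v, _, rfl⟩ := hu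
    refine ⟨v, ?_⟩
    ext x
    simp only [Set.mem_setOf_eq, Set.mem_sep_iff, Finset.mem_coe]
    constructor
    · intro ⟨hxs, hadj⟩
      have hxC : x ∈ C := hsC hxs
      have : x ∈ s ∩ f v := Finset.mem_inter.mpr
        ⟨hxs, Finset.mem_filter.mpr ⟨hxC, hadj⟩⟩
      rw [hus] at this
      exact (Finset.mem_filter.mp this).2
    · intro hxS
      have hxs : x ∈ s := hS hxS
      have hxt : x ∈ t := Finset.mem_filter.mpr ⟨hxs, hxS⟩
      rw [← hus] at hxt
      obtain ⟨hxs', hxf⟩ := Finset.mem_inter.mp hxt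
      exact ⟨hxs, (Finset.mem_filter.mp hxf).2⟩
  -- bound the shatterer
  have hsub : 𝒜.shatterer ⊆ (Finset.range (d + 1)).biUnion (fun i => C.powersetCard i) := by
    intro s hs
    obtain ⟨h1, h2⟩ := hshat s hs
    rw [Finset.mem_biUnion]
    exact ⟨s.card, Finset.mem_range.mpr (by omega), Finset.mem_powersetCard.mpr ⟨h1, rfl⟩⟩
  have hbound : Fintype.card V ≤ m ^ d + 1 := by
    calc Fintype.card V = 𝒜.card := hcardA.symm
      _ ≤ 𝒜.shatterer.card := Finset.card_le_card_shatterer 𝒜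
      _ ≤ ((Finset.range (d + 1)).biUnion (fun i => C.powersetCard i)).card :=
          Finset.card_le_card hsub
      _ ≤ ∑ i ∈ range (d + 1), (C.powersetCard i).card := Finset.card_biUnion_le
      _ = ∑ i ∈ range (d + 1), m.choose i := by
          simp [Finset.card_powersetCard, hmdef]
      _ ≤ m ^ d + 1 := sum_choose_le_pow_add_one d hd m hm
  -- conclude with real powers
  have hd0 : (d : ℝ) ≠ 0 := by positivity
  have h1 : ((Fintype.card V : ℝ) - 1) ≤ (m : ℝ) ^ (d : ℕ) := by
    have := hbound
    have : (Fintype.card V : ℝ) ≤ (m : ℝ) ^ d + 1 := by exact_mod_cast this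
    linarith
  have h0 : (0 : ℝ) ≤ (Fintype.card V : ℝ) - 1 := by
    have : (1 : ℝ) ≤ (Fintype.card V : ℝ) := by exact_mod_cast hn
    linarith
  have hpow : ((Fintype.card V : ℝ) - 1) ^ (1 / (d : ℝ)) ≤
      ((m : ℝ) ^ (d : ℕ)) ^ (1 / (d : ℝ)) :=
    Real.rpow_le_rpow h0 h1 (by positivity)
  calc ((Fintype.card V : ℝ) - 1) ^ (1 / (d : ℝ)) ≤ ((m : ℝ) ^ (d : ℕ)) ^ (1 / (d : ℝ)) := hpow
    _ = (m : ℝ) := by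
        rw [← Real.rpow_natCast (m : ℝ) d, ← Real.rpow_mul (by positivity)]
        rw [mul_one_div, div_self hd0, Real.rpow_one]
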